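/- arXiv:1412.0881 — 6 statements merged into one kernel-verified Lean document; each statement's English description precedes it below -/
import Mathlib

section
/- In the graph G on ℚ⁺ ∪ ℚ⁻ with edges q⁺r⁻ for q < r, if an automorphism φ satisfies φ(q⁺) = r⁺ then φ(q⁻) = r⁻, and if φ(q⁺) = r⁻ then φ(q⁻) = r⁺. Consequently an automorphism of G is uniquely determined by its action on ℚ⁺. -/
open Sum

/-- The graph on two copies of ℚ with `inl q` adjacent to `inr r` iff `q < r`. -/
def G : SimpleGraph (ℚ ⊕ ℚ) where
  Adj u v := match u, v with
    | .inl q, .inr r => q < r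
    | .inr r, .inl q => q < r
    | _, _ => False
  symm := ⟨by intro u v h; cases u <;> cases v <;> simp_all⟩
  loopless := ⟨by intro u h; cases u <;> simp_all⟩

/-- Two `inl` vertices cannot map to different sides. -/
lemma L_left (φ : G ≃g G) (q a r c : ℚ) (hq : φ (inl q) = inl r)
    (ha : φ (inl a) = inr c) : False := by
  set t := max q a + 1 with ht
  have h1 : G.Adj (inl q) (inr t) :=
    lt_of_le_of_lt (le_max_left q a) (lt_add_one _)
  have h2 : G.Adj (inl a) (inr t) :=
    lt_of_le_of_lt (le_max_right q a) (lt_add_one _)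
  have h1' := φ.map_adj_iff.mpr h1
  have h2' := φ.map_adj_iff.mpr h2
  rw [hq] at h1'
  rw [ha] at h2'
  cases hw : φ (inr t) with
  | inl d => rw [hw] at h1'; exact h1'
  | inr d => rw [hw] at h2'; exact h2'

/-- Two `inr` vertices cannot map to different sides. -/
lemma L_right (φ : G ≃g G) (q a r c : ℚ) (hq : φ (inr q) = inr r)
    (ha : φ (inr a) = inl c) : False := by
  set t := min q a - 1 with ht
  have h1 : G.Adj (inr q) (inl t) :=
    lt_of_lt_of_le (by linarith [min_le_left q a] : t < min q a) (min_le_left q a)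
  have h1 : G.Adj (inr q) (inl t) := by
    show t < q
    have := min_le_left q a; linarith
  have h2 : G.Adj (inr a) (inl t) := by
    show t < a
    have := min_le_right q a; linarith
  have h1' := φ.map_adj_iff.mpr h1
  have h2' := φ.map_adj_iff.mpr h2
  rw [hq] at h1'
  rw [ha] at h2'
  cases hw : φ (inl t) with
  | inl d => rw [hw] at h2'; exact h2'
  | inr d => rw [hw] at h1'; exact h1'

lemma symm_inl (φ : G ≃g G) {u : ℚ ⊕ ℚ} {v : ℚ ⊕ ℚ} (h : φ u = v) :
    φ.symm v = u := by rw [← h]; exact φ.symm_apply_apply u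

/-- If `φ (inl q) = inl r` then `φ (inr q) = inr r`. -/
lemma lemA (φ : G ≃g G) (q r : ℚ) (h : φ (inl q) = inl r) : φ (inr q) = inr r := by
  have hsymm : φ.symm (inl r) = inl q := symm_inl φ h
  -- side preservation
  obtain ⟨s, hs⟩ : ∃ s, φ (inr q) = inr s := by
    cases hc : φ (inr q) with
    | inl s => exact absurd (symm_inl φ hc) (fun hh => L_left φ.symm r s q q hsymm hh |>.elim)
    | inr s => exact ⟨s, rfl⟩
  -- preimages stay on their side
  have preL : ∀ x : ℚ, ∃ a, φ (inl a) = inl x := by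
    intro x
    cases hc : φ.symm (inl x) with
    | inl a => exact ⟨a, symm_inl φ.symm hc⟩
    | inr b => exact (L_left φ.symm r x q b hsymm hc).elim
  have preR : ∀ y : ℚ, ∃ b, φ (inr b) = inr y := by
    intro y
    cases hc : φ.symm (inr y) with
    | inl a => exact (L_left φ q a r y h (symm_inl φ.symm hc)).elim
    | inr b => exact ⟨b, symm_inl φ.symm hc⟩
  -- show r = s
  suffices hrs : r = s by rw [hs, hrs]
  by_contra hne
  rcases lt_or_gt_of_ne hne with hlt | hlt
  · -- r < s
    obtain ⟨y1, hy1, hy1'⟩ := exists_between hlt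
    obtain ⟨y2, hy2, hy2'⟩ := exists_between hy1'
    obtain ⟨b, hb⟩ := preR y1
    obtain ⟨a, ha⟩ := preL y2
    have h1 : a < q := by
      have hadj : G.Adj (inl y2) (inr s) := hy2'
      rw [← ha, ← hs] at hadj
      exact φ.map_adj_iff.mp hadj
    have h2 : q < b := by
      have hadj : G.Adj (inl r) (inr y1) := hy1
      rw [← h, ← hb] at hadj
      exact φ.map_adj_iff.mp hadj
    have h3 : ¬ a < b := by
      intro hab
      have hadj : G.Adj (inl a) (inr b) := hab
      have := φ.map_adj_iff.mpr hadj
      rw [ha, hb] at this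
      exact absurd (this : y2 < y1) (not_lt.mpr hy2.le)
    exact h3 (h1.trans h2)
  · -- s < r
    obtain ⟨y1, hy1, hy1'⟩ := exists_between hlt
    obtain ⟨y2, hy2, hy2'⟩ := exists_between hy1'
    obtain ⟨a, ha⟩ := preL y1
    obtain ⟨b, hb⟩ := preR y2
    have h1 : ¬ a < q := by
      intro haq
      have hadj : G.Adj (inl a) (inr q) := haq
      have := φ.map_adj_iff.mpr hadj
      rw [ha, hs] at this
      exact absurd (this : y1 < s) (not_lt.mpr hy1.le)
    have h2 : ¬ q < b := by
      intro hqb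
      have hadj : G.Adj (inl q) (inr b) := hqb
      have := φ.map_adj_iff.mpr hadj
      rw [h, hb] at this
      exact absurd (this : r < y2) (not_lt.mpr hy2'.le)
    have h3 : a < b := by
      have hadj : G.Adj (inl y1) (inr y2) := hy2
      rw [← ha, ← hb] at hadj
      exact φ.map_adj_iff.mp hadj
    exact absurd h3 (not_lt.mpr ((not_lt.mp h2).trans (not_lt.mp h1)))

/-- If `φ (inl q) = inr r` then `φ (inr q) = inl r`. -/
lemma lemB (φ : G ≃g G) (q r : ℚ) (h : φ (inl q) = inr r) : φ (inr q) = inl r := by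
  have hsymm : φ.symm (inr r) = inl q := symm_inl φ h
  obtain ⟨s, hs⟩ : ∃ s, φ (inr q) = inl s := by
    cases hc : φ (inr q) with
    | inl s => exact ⟨s, rfl⟩
    | inr s => exact (L_right φ.symm s r q q (symm_inl φ hc) hsymm).elim
  have hssymm : φ.symm (inl s) = inr q := symm_inl φ hs
  -- preimages swap sides
  have preL : ∀ x : ℚ, ∃ b, φ (inr b) = inl x := by
    intro x
    cases hc : φ.symm (inl x) with
    | inl a => exact (L_left φ a q x r (symm_inl φ.symm hc) h).elim
    | inr b => exact ⟨b, symm_inl φ.symm hc⟩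
  have preR : ∀ y : ℚ, ∃ a, φ (inl a) = inr y := by
    intro y
    cases hc : φ.symm (inr y) with
    | inl a => exact ⟨a, symm_inl φ.symm hc⟩
    | inr b => exact (L_right φ b q y s (symm_inl φ.symm hc) hs).elim
  suffices hrs : r = s by rw [hs, hrs]
  by_contra hne
  rcases lt_or_gt_of_ne hne with hlt | hlt
  · -- r < s : pick r < y1 < y2 < s, b with g b = y1, a with f a = y2
    obtain ⟨y1, hy1, hy1'⟩ := exists_between hlt
    obtain ⟨y2, hy2, hy2'⟩ := exists_between hy1'
    obtain ⟨b, hb⟩ := preL y1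
    obtain ⟨a, ha⟩ := preR y2
    have h1 : a < b := by
      have hadj : G.Adj (inr y2) (inl y1) := hy2
      rw [← ha, ← hb] at hadj
      exact φ.map_adj_iff.mp hadj
    have h2 : ¬ a < q := by
      intro haq
      have hadj : G.Adj (inl a) (inr q) := haq
      have := φ.map_adj_iff.mpr hadj
      rw [ha, hs] at this
      exact absurd (this : s < y2) (not_lt.mpr hy2'.le)
    have h3 : ¬ q < b := by
      intro hqb
      have hadj : G.Adj (inl q) (inr b) := hqb
      have := φ.map_adj_iff.mpr hadj
      rw [h, hb] at this
      exact absurd (this : y1 < r) (not_lt.mpr hy1.le)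
    exact h2 (lt_of_lt_of_le h1 (not_lt.mp h3))
  · -- s < r : pick s < y1 < y2 < r, a with f a = y1, b with g b = y2
    obtain ⟨y1, hy1, hy1'⟩ := exists_between hlt
    obtain ⟨y2, hy2, hy2'⟩ := exists_between hy1'
    obtain ⟨a, ha⟩ := preR y1
    obtain ⟨b, hb⟩ := preL y2
    have h1 : a < q := by
      have hadj : G.Adj (inr y1) (inl s) := hy1
      rw [← ha, ← hs] at hadj
      exact φ.map_adj_iff.mp hadj
    have h2 : q < b := by
      have hadj : G.Adj (inr r) (inl y2) := hy2'
      rw [← h, ← hb] at hadj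
      exact φ.map_adj_iff.mp hadj
    have h3 : ¬ a < b := by
      intro hab
      have hadj : G.Adj (inl a) (inr b) := hab
      have := φ.map_adj_iff.mpr hadj
      rw [ha, hb] at this
      exact absurd (this : y2 < y1) (not_lt.mpr hy2.le)
    exact h3 (h1.trans h2)

theorem G_aut_determined :
    (∀ (φ : G ≃g G) (q r : ℚ),
      (φ (inl q) = inl r → φ (inr q) = inr r) ∧
      (φ (inl q) = inr r → φ (inr q) = inl r)) ∧
    ∀ φ ψ : G ≃g G, (∀ q : ℚ, φ (inl q) = ψ (inl q)) → φ = ψ := by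
  constructor
  · exact fun φ q r => ⟨lemA φ q r, lemB φ q r⟩
  · intro φ ψ hagree
    have hv : ∀ v, φ v = ψ v := by
      intro v
      cases v with
      | inl q => exact hagree q
      | inr q =>
        cases hc : φ (inl q) with
        | inl r =>
          rw [lemA φ q r hc, lemA ψ q r (by rw [← hagree q, hc])]
        | inr r =>
          rw [lemB φ q r hc, lemB ψ q r (by rw [← hagree q, hc])]
    exact RelIso.ext hv
end

section
/- The graph G on ℚ⁺ ∪ ℚ⁻ with edges q⁺r⁻ for q < r is arc transitive: for any two ordered pairs of adjacent vertices (u₁, v₁) and (u₂, v₂), there is an automorphism φ of G with φ(u₁) = u₂ and φ(v₁) = v₂. -/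
open Sum

/-- Affine automorphism of G. -/
def affIso (a b : ℚ) (ha : 0 < a) : G ≃g G where
  toFun := Sum.map (fun x => a * x + b) (fun x => a * x + b)
  invFun := Sum.map (fun x => (x - b) / a) (fun x => (x - b) / a)
  left_inv := by rintro (x | x) <;> simp <;> field_simp
  right_inv := by rintro (x | x) <;> simp <;> field_simp <;> ring
  map_rel_iff' := by
    rintro (q | q) (r | r) <;> simp [G] <;>
      constructor <;> intro h <;> nlinarith

/-- Swap automorphism of G. -/
def swapIso : G ≃g G where
  toFun := Sum.elim (fun q => inr (-q)) (fun r => inl (-r))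
  invFun := Sum.elim (fun q => inr (-q)) (fun r => inl (-r))
  left_inv := by rintro (x | x) <;> simp
  right_inv := by rintro (x | x) <;> simp
  map_rel_iff' := by rintro (q | q) (r | r) <;> simp [G]

lemma aff_spec (q₁ r₁ q₂ r₂ : ℚ) (h1 : q₁ < r₁) (h2 : q₂ < r₂) :
    ∃ a b : ℚ, 0 < a ∧ a * q₁ + b = q₂ ∧ a * r₁ + b = r₂ := by
  have ha' : r₁ - q₁ ≠ 0 := by linarith
  refine ⟨(r₂ - q₂) / (r₁ - q₁), q₂ - (r₂ - q₂) / (r₁ - q₁) * q₁,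
    div_pos (by linarith) (by linarith), by ring, ?_⟩
  field_simp
  ring

theorem G_arc_transitive (u₁ v₁ u₂ v₂ : ℚ ⊕ ℚ) (h₁ : G.Adj u₁ v₁) (h₂ : G.Adj u₂ v₂) :
    ∃ φ : G ≃g G, φ u₁ = u₂ ∧ φ v₁ = v₂ := by
  match u₁, v₁, u₂, v₂ with
  | inl q₁, inr r₁, inl q₂, inr r₂ =>
    obtain ⟨a, b, ha, h1, h2⟩ := aff_spec q₁ r₁ q₂ r₂ h₁ h₂
    exact ⟨affIso a b ha, by simp [affIso, h1], by simp [affIso, h2]⟩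
  | inl q₁, inr r₁, inr r₂, inl q₂ =>
    obtain ⟨a, b, ha, h1, h2⟩ := aff_spec q₁ r₁ (-r₂) (-q₂) h₁ (by simp_all [G])
    refine ⟨(affIso a b ha).trans swapIso, ?_, ?_⟩ <;>
      simp [affIso, swapIso] <;> linarith
  | inr r₁, inl q₁, inl q₂, inr r₂ =>
    obtain ⟨a, b, ha, h1, h2⟩ := aff_spec (-r₁) (-q₁) q₂ r₂ (by simp_all [G]) h₂
    refine ⟨swapIso.trans (affIso a b ha), ?_, ?_⟩ <;>
      simp [affIso, swapIso] <;> linarith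
  | inr r₁, inl q₁, inr r₂, inl q₂ =>
    obtain ⟨a, b, ha, h1, h2⟩ := aff_spec q₁ r₁ q₂ r₂ (by simp_all [G]) (by simp_all [G])
    exact ⟨affIso a b ha, by simp [affIso, h2], by simp [affIso, h1]⟩
end

section
/- Every automorphism of the graph G on ℚ⁺ ∪ ℚ⁻ with edges q⁺r⁻ for q < r that fixes ℚ⁺ setwise is of the form γ↑ for some order automorphism γ of ℚ (i.e. it acts as an order-preserving bijection γ on both copies simultaneously). -/
open Sum

theorem G_aut_fixing_is_up (φ : G ≃g G) (h : ∀ q : ℚ, ∃ r : ℚ, φ (inl q) = inl r) :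
    ∃ γ : ℚ ≃o ℚ, ∀ q : ℚ, φ (inl q) = inl (γ q) ∧ φ (inr q) = inr (γ q) := by
  choose f hf using h
  have hr : ∀ q : ℚ, ∃ s : ℚ, φ (inr q) = inr s := by
    intro q
    cases hφ : φ (inr q) with
    | inr s => exact ⟨s, rfl⟩
    | inl s =>
      exfalso
      have hadj : G.Adj (inl (q - 1)) (inr q) := by
        show (q - 1 : ℚ) < q; linarith
      have h2 : G.Adj (φ (inl (q - 1))) (φ (inr q)) := φ.map_adj_iff.mpr hadj
      rw [hf, hφ] at h2
      exact h2
  choose g hg using hr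
  have key : ∀ q r : ℚ, q < r ↔ f q < g r := by
    intro q r
    have : G.Adj (φ (inl q)) (φ (inr r)) ↔ G.Adj (inl q) (inr r) := φ.map_adj_iff
    rw [hf, hg] at this
    exact (this.symm : (q < r) ↔ _)
  have glef : ∀ q : ℚ, g q ≤ f q := by
    intro q
    by_contra hlt
    exact lt_irrefl q ((key q q).mpr (lt_of_not_ge hlt))
  have fmono : StrictMono f := by
    intro q q' hq
    exact lt_of_lt_of_le ((key q q').mp hq) (glef q')
  have fsurj : Function.Surjective f := by
    intro v
    obtain ⟨u, hu⟩ := φ.surjective (inl v)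
    cases u with
    | inl p =>
      refine ⟨p, ?_⟩
      have := hf p
      rw [hu] at this
      exact (inl_injective this).symm
    | inr p =>
      exfalso
      have := hg p
      rw [hu] at this
      exact Sum.inl_ne_inr this
  have feqg : ∀ q : ℚ, f q = g q := by
    intro q
    by_contra hne
    have hlt : g q < f q := lt_of_le_of_ne (glef q) (Ne.symm hne)
    obtain ⟨p, hp⟩ := fsurj ((g q + f q) / 2)
    have h1 : g q < f p := by rw [hp]; linarith
    have h2 : f p < f q := by rw [hp]; linarith
    have hpq : p < q := fmono.lt_iff_lt.mp h2
    have : f p < g q := (key p q).mp hpq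
    linarith
  refine ⟨StrictMono.orderIsoOfSurjective f fmono fsurj, fun q => ⟨hf q, ?_⟩⟩
  rw [hg q, ← feqg q]
  rfl
end

section
/- Every automorphism of the graph G on ℚ⁺ ∪ ℚ⁻ with edges q⁺r⁻ for q < r is either of the form γ↑ or of the form γ↓ for some order automorphism γ of ℚ. In particular, the automorphism group of G is isomorphic to the group generated by Aut(ℚ, <) acting diagonally together with the order-reversing swap. -/
open Sum

lemma G_adj_lr (q r : ℚ) : G.Adj (inl q) (inr r) ↔ q < r := Iff.rfl

lemma G_adj_inl {q : ℚ} {v : ℚ ⊕ ℚ} (h : G.Adj (inl q) v) : ∃ r, v = inr r := by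
  cases v with
  | inl r => exact absurd h (by simp [G])
  | inr r => exact ⟨r, rfl⟩

lemma G_adj_inr {q : ℚ} {v : ℚ ⊕ ℚ} (h : G.Adj (inr q) v) : ∃ r, v = inl r := by
  cases v with
  | inl r => exact ⟨r, rfl⟩
  | inr r => exact absurd h (by simp [G])

lemma key {f g : ℚ → ℚ} (hg : Function.Surjective g)
    (h : ∀ q r, q < r ↔ f q < g r) : f = g ∧ StrictMono f := by
  have hfm : StrictMono f := by
    intro a b hab
    obtain ⟨r, har, hrb⟩ := exists_between hab
    have h1 : f a < g r := (h a r).1 har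
    have h2 : g r ≤ f b := not_lt.1 fun hh => absurd ((h b r).2 hh) (not_lt.2 hrb.le)
    exact h1.trans_le h2
  have hgm : StrictMono g := by
    intro a b hab
    obtain ⟨q, haq, hqb⟩ := exists_between hab
    have h1 : g a ≤ f q := not_lt.1 fun hh => absurd ((h q a).2 hh) (not_lt.2 haq.le)
    exact h1.trans_lt ((h q b).1 hqb)
  have hle : ∀ q, g q ≤ f q := fun q => not_lt.1 fun hh => lt_irrefl q ((h q q).2 hh)
  have heq : ∀ q, f q = g q := by
    intro q
    by_contra hne
    have hlt : g q < f q := lt_of_le_of_ne (hle q) (Ne.symm hne)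
    obtain ⟨r, hr⟩ := hg ((g q + f q) / 2)
    have h1 : g q < g r := by rw [hr]; linarith
    have h2 : g r < f q := by rw [hr]; linarith
    have hqr : q < r := hgm.lt_iff_lt.mp h1
    exact absurd ((h q r).1 hqr) (not_lt.2 h2.le)
  exact ⟨funext heq, hfm⟩

theorem G_aut_classification (φ : G ≃g G) :
    (∃ γ : ℚ ≃o ℚ, ∀ q : ℚ, φ (inl q) = inl (γ q) ∧ φ (inr q) = inr (γ q)) ∨
    (∃ γ : ℚ ≃o ℚ, ∀ q : ℚ, φ (inl q) = inr (-(γ q)) ∧ φ (inr q) = inl (-(γ q))) := by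
  rcases hv : φ (inl 0) with ⟨a⟩ | ⟨a⟩
  · -- side preserving
    have hl : ∀ q, ∃ s, φ (inl q) = inl s := by
      intro q
      set w : ℚ := max 0 q + 1 with hw
      have h0w : G.Adj (inl 0) (inr w) := by
        rw [G_adj_lr]; have := le_max_left 0 q; linarith
      have hqw : G.Adj (inl q) (inr w) := by
        rw [G_adj_lr]; have := le_max_right 0 q; linarith
      obtain ⟨b, hb⟩ := G_adj_inl (by rw [← hv]; exact φ.map_adj_iff.2 h0w)
      have := φ.map_adj_iff.2 hqw
      rw [hb] at this
      obtain ⟨s, hs⟩ := G_adj_inr this.symm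
      exact ⟨s, hs⟩
    choose f hf using hl
    have hr : ∀ r, ∃ s, φ (inr r) = inr s := by
      intro r
      have hadj : G.Adj (inl (r - 1)) (inr r) := by rw [G_adj_lr]; linarith
      have := φ.map_adj_iff.2 hadj
      rw [hf (r - 1)] at this
      exact G_adj_inl this
    choose g hg using hr
    have hrel : ∀ q r, q < r ↔ f q < g r := by
      intro q r
      rw [← G_adj_lr q r, ← φ.map_adj_iff, hf, hg, G_adj_lr]
    have hgs : Function.Surjective g := by
      intro s
      rcases hv' : φ.symm (inr s) with ⟨t⟩ | ⟨t⟩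
      · exfalso
        have : φ (inl t) = inr s := by rw [← hv']; exact φ.apply_symm_apply _
        rw [hf] at this; exact Sum.inl_ne_inr this
      · refine ⟨t, ?_⟩
        have : φ (inr t) = inr s := by rw [← hv']; exact φ.apply_symm_apply _
        rw [hg] at this; exact inr_injective this
    obtain ⟨hfg, hfm⟩ := key hgs hrel
    have hfs : Function.Surjective f := hfg ▸ hgs
    refine Or.inl ⟨StrictMono.orderIsoOfSurjective f hfm hfs, fun q => ?_⟩
    constructor
    · rw [hf]; rfl
    · rw [hg, ← hfg]; rfl
  · -- side swapping
    have hl : ∀ q, ∃ s, φ (inl q) = inr s := by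
      intro q
      set w : ℚ := max 0 q + 1 with hw
      have h0w : G.Adj (inl 0) (inr w) := by
        rw [G_adj_lr]; have := le_max_left 0 q; linarith
      have hqw : G.Adj (inl q) (inr w) := by
        rw [G_adj_lr]; have := le_max_right 0 q; linarith
      obtain ⟨b, hb⟩ := G_adj_inr (by rw [← hv]; exact φ.map_adj_iff.2 h0w)
      have := φ.map_adj_iff.2 hqw
      rw [hb] at this
      exact G_adj_inl this.symm
    choose f hf using hl
    have hr : ∀ r, ∃ s, φ (inr r) = inl s := by
      intro r
      have hadj : G.Adj (inl (r - 1)) (inr r) := by rw [G_adj_lr]; linarith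
      have := φ.map_adj_iff.2 hadj
      rw [hf (r - 1)] at this
      exact G_adj_inr this
    choose g hg using hr
    have hrel : ∀ q r, q < r ↔ (fun x => -f x) q < (fun x => -g x) r := by
      intro q r
      have : G.Adj (inr (f q)) (inl (g r)) ↔ g r < f q := Iff.rfl
      rw [← G_adj_lr q r, ← φ.map_adj_iff, hf, hg, this]
      simp only [neg_lt_neg_iff]
    have hgs : Function.Surjective (fun x => -g x) := by
      intro s
      rcases hv' : φ.symm (inl (-s)) with ⟨t⟩ | ⟨t⟩
      · exfalso
        have : φ (inl t) = inl (-s) := by rw [← hv']; exact φ.apply_symm_apply _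
        rw [hf] at this; exact Sum.inr_ne_inl this
      · refine ⟨t, ?_⟩
        have : φ (inr t) = inl (-s) := by rw [← hv']; exact φ.apply_symm_apply _
        rw [hg] at this
        have := inl_injective this
        simp [this]
    obtain ⟨hfg, hfm⟩ := key hgs hrel
    have hfs : Function.Surjective (fun x => -f x) := hfg ▸ hgs
    refine Or.inr ⟨StrictMono.orderIsoOfSurjective _ hfm hfs, fun q => ?_⟩
    have hcoe : ∀ x, (StrictMono.orderIsoOfSurjective (fun x => -f x) hfm hfs) x = -f x :=
      fun x => rfl
    constructor
    · rw [hf, hcoe, neg_neg]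
    · have hq : f q = g q := by have := congrFun hfg q; simpa using this
      rw [hg, hcoe, neg_neg, hq]
end

section
/- The graph G on ℚ⁺ ∪ ℚ⁻ with edges q⁺r⁻ for q < r has infinite motion: every non-identity automorphism of G moves infinitely many vertices. -/
open Sum

lemma G_not_adj_rr (q r : ℚ) : ¬ G.Adj (inr q) (inr r) := id

lemma G_not_adj_ll (q r : ℚ) : ¬ G.Adj (inl q) (inl r) := id

lemma G_fixed (φ : G ≃g G) (hfin : {v : ℚ ⊕ ℚ | φ v ≠ v}.Finite) (v : ℚ ⊕ ℚ) :
    φ v = v := by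
  have hA : {s : ℚ | φ (inr s) ≠ inr s}.Finite :=
    Set.Finite.preimage (Sum.inr_injective.injOn) hfin
  have hB : {s : ℚ | φ (inl s) ≠ inl s}.Finite :=
    Set.Finite.preimage (Sum.inl_injective.injOn) hfin
  by_contra hv
  cases v with
  | inl q =>
    rcases h : φ (inl q) with q' | r
    · have hne : q ≠ q' := by rintro rfl; exact hv h
      rcases hne.lt_or_gt with hlt | hlt
      · obtain ⟨s, hs, hsA⟩ :=
          (Set.Ioo_infinite hlt).exists_notMem_finite hA
        have hsfix : φ (inr s) = inr s := not_not.mp hsA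
        have : G.Adj (φ (inl q)) (φ (inr s)) := φ.map_rel_iff.mpr ((G_adj_lr q s).mpr hs.1)
        rw [h, hsfix, G_adj_lr] at this
        exact absurd this (not_lt.mpr hs.2.le)
      · obtain ⟨s, hs, hsA⟩ :=
          (Set.Ioo_infinite hlt).exists_notMem_finite hA
        have hsfix : φ (inr s) = inr s := not_not.mp hsA
        have : G.Adj (φ (inl q)) (φ (inr s)) := by
          rw [h, hsfix]; exact (G_adj_lr q' s).mpr hs.1
        rw [φ.map_rel_iff, G_adj_lr] at this
        exact absurd this (not_lt.mpr hs.2.le)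
    · obtain ⟨s, hs, hsA⟩ := (Set.Ioi_infinite q).exists_notMem_finite hA
      have hsfix : φ (inr s) = inr s := not_not.mp hsA
      have : G.Adj (φ (inl q)) (φ (inr s)) := φ.map_rel_iff.mpr ((G_adj_lr q s).mpr hs)
      rw [h, hsfix] at this
      exact G_not_adj_rr r s this
  | inr r =>
    rcases h : φ (inr r) with q | r'
    · obtain ⟨s, hs, hsB⟩ := (Set.Iio_infinite r).exists_notMem_finite hB
      have hsfix : φ (inl s) = inl s := not_not.mp hsB
      have : G.Adj (φ (inl s)) (φ (inr r)) := φ.map_rel_iff.mpr ((G_adj_lr s r).mpr hs)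
      rw [h, hsfix] at this
      exact G_not_adj_ll s q this
    · have hne : r ≠ r' := by rintro rfl; exact hv h
      rcases hne.lt_or_gt with hlt | hlt
      · obtain ⟨s, hs, hsB⟩ :=
          (Set.Ioo_infinite hlt).exists_notMem_finite hB
        have hsfix : φ (inl s) = inl s := not_not.mp hsB
        have : G.Adj (φ (inl s)) (φ (inr r)) := by
          rw [h, hsfix]; exact (G_adj_lr s r').mpr hs.2
        rw [φ.map_rel_iff, G_adj_lr] at this
        exact absurd this (not_lt.mpr hs.1.le)
      · obtain ⟨s, hs, hsB⟩ :=
          (Set.Ioo_infinite hlt).exists_notMem_finite hB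
        have hsfix : φ (inl s) = inl s := not_not.mp hsB
        have : G.Adj (φ (inl s)) (φ (inr r)) := φ.map_rel_iff.mpr ((G_adj_lr s r).mpr hs.2)
        rw [h, hsfix, G_adj_lr] at this
        exact absurd this (not_lt.mpr hs.1.le)

theorem G_infinite_motion (φ : G ≃g G) (hφ : φ ≠ (SimpleGraph.Iso.refl : G ≃g G)) :
    {v : ℚ ⊕ ℚ | φ v ≠ v}.Infinite := by
  by_contra hfin
  rw [Set.not_infinite] at hfin
  exact hφ (RelIso.ext (G_fixed φ hfin))
end

section
/- The graph G on ℚ⁺ ∪ ℚ⁻ with edges q⁺r⁻ for q < r admits no distinguishing colouring with finitely many colours: for every finite set C and every colouring c : V → C there is a non-identity automorphism of G preserving c. -/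
open Sum

noncomputable section ColoredBF

namespace ColoredBF

open Order

variable {X : Type} {C : Type} [LinearOrder X] (e : X → C)

/-- Colour-preserving finite partial order isomorphisms of `X`. -/
def PIso : Type :=
  { f : Finset (X × X) //
    (∀ p ∈ f, ∀ q ∈ f, cmp (Prod.fst p) (Prod.fst q) = cmp (Prod.snd p) (Prod.snd q)) ∧
    ∀ p ∈ f, e (Prod.fst p) = e (Prod.snd p) }

instance : Preorder (PIso e) := Subtype.preorder _

/-- The density/unboundedness hypothesis: every colour class that is realized is
"everywhere" relative to finite sets. -/
def Rich : Prop :=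
  ∀ (w : X) (lo hi : Finset X), (∀ x ∈ lo, ∀ y ∈ hi, x < y) →
    ∃ b : X, (∀ x ∈ lo, x < b) ∧ (∀ y ∈ hi, b < y) ∧ e b = e w

namespace PIso

variable {e}

/-- Swap the two sides of a partial isomorphism. -/
def comm (f : PIso e) : PIso e :=
  ⟨f.1.map (Equiv.prodComm X X).toEmbedding, by
    constructor
    · intro p hp q hq
      rw [Finset.mem_map_equiv] at hp hq
      have := f.2.1 _ hp _ hq
      simpa using this.symm
    · intro p hp
      rw [Finset.mem_map_equiv] at hp
      have := f.2.2 _ hp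
      simpa using this.symm⟩

lemma comm_comm (f : PIso e) : f.comm.comm = f := by
  apply Subtype.ext
  show (f.1.map _).map _ = f.1
  rw [Finset.map_map]
  ext ⟨x, y⟩
  simp

lemma mem_comm {f : PIso e} {a b : X} (h : (a, b) ∈ f.1) : (b, a) ∈ f.comm.1 := by
  rw [show f.comm.1 = f.1.map (Equiv.prodComm X X).toEmbedding from rfl, Finset.mem_map_equiv]
  simpa using h

theorem exists_across (H : Rich e) (f : PIso e) (a : X) :
    ∃ b : X, (∀ p ∈ f.1, cmp (Prod.fst p) a = cmp (Prod.snd p) b) ∧ e b = e a := by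
  by_cases h : ∃ b, (a, b) ∈ f.1
  · obtain ⟨b, hb⟩ := h
    exact ⟨b, fun p hp => f.2.1 _ hp _ hb, (f.2.2 _ hb).symm⟩
  have key :
      ∀ x ∈ (f.1.filter fun p : X × X => p.fst < a).image Prod.snd,
        ∀ y ∈ (f.1.filter fun p : X × X => a < p.fst).image Prod.snd, x < y := by
    intro x hx y hy
    rw [Finset.mem_image] at hx hy
    rcases hx with ⟨p, hp1, rfl⟩
    rcases hy with ⟨q, hq1, rfl⟩
    rw [Finset.mem_filter] at hp1 hq1
    rw [← lt_iff_lt_of_cmp_eq_cmp (f.2.1 _ hp1.1 _ hq1.1)]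
    exact lt_trans hp1.right hq1.right
  obtain ⟨b, hb, hb', hbe⟩ := H a _ _ key
  refine ⟨b, ?_, hbe⟩
  rintro ⟨p1, p2⟩ hp
  have hne : p1 ≠ a := fun he => h ⟨p2, he ▸ hp⟩
  rcases lt_or_gt_of_ne hne with hl | hr
  · have : p1 < a ∧ p2 < b :=
      ⟨hl, hb _ (Finset.mem_image.mpr ⟨(p1, p2), Finset.mem_filter.mpr ⟨hp, hl⟩, rfl⟩)⟩
    rw [← cmp_eq_lt_iff, ← cmp_eq_lt_iff] at this
    exact this.1.trans this.2.symm
  · have : a < p1 ∧ b < p2 :=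
      ⟨hr, hb' _ (Finset.mem_image.mpr ⟨(p1, p2), Finset.mem_filter.mpr ⟨hp, hr⟩, rfl⟩)⟩
    rw [← cmp_eq_gt_iff, ← cmp_eq_gt_iff] at this
    exact this.1.trans this.2.symm

/-- Partial isos defined at `a` on the left form a cofinal set. -/
def definedAtLeft (H : Rich e) (a : X) : Cofinal (PIso e) where
  carrier := {f | ∃ b : X, (a, b) ∈ f.1}
  isCofinal f := by
    obtain ⟨b, a_b, hbe⟩ := exists_across H f a
    refine
      ⟨⟨insert (a, b) f.1, ?_, ?_⟩, ⟨b, Finset.mem_insert_self _ _⟩,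
        Finset.subset_insert _ _⟩
    · intro p hp q hq
      rw [Finset.mem_insert] at hp hq
      rcases hp with (rfl | pf) <;> rcases hq with (rfl | qf)
      · simp only [cmp_self_eq_eq]
      · rw [cmp_eq_cmp_symm]
        exact a_b _ qf
      · exact a_b _ pf
      · exact f.2.1 _ pf _ qf
    · intro p hp
      rw [Finset.mem_insert] at hp
      rcases hp with rfl | pf
      · exact hbe.symm
      · exact f.2.2 _ pf

/-- Partial isos defined at `b` on the right form a cofinal set. -/
def definedAtRight (H : Rich e) (b : X) : Cofinal (PIso e) where
  carrier := {f | ∃ a : X, (a, b) ∈ f.1}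
  isCofinal f := by
    rcases (definedAtLeft H b).isCofinal f.comm with ⟨f', ⟨a, ha⟩, hl⟩
    refine ⟨f'.comm, ⟨a, mem_comm ha⟩, ?_⟩
    have : f.comm.comm ≤ f'.comm := Finset.map_subset_map.mpr hl
    rwa [comm_comm] at this

end PIso

open PIso

theorem exists_iso [Countable X] (H : Rich e) (p p' : X) (hpp' : e p = e p') :
    ∃ g : X ≃o X, g p = p' ∧ ∀ x : X, e (g x) = e x := by
  cases nonempty_encodable X
  let seed : PIso e := ⟨{(p, p')}, by
    constructor
    · intro q hq r hr
      rw [Finset.mem_singleton] at hq hr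
      subst hq; subst hr
      simp [cmp_self_eq_eq]
    · intro q hq
      rw [Finset.mem_singleton] at hq
      subst hq
      exact hpp'⟩
  let to_cofinal : X ⊕ X → Cofinal (PIso e) := fun q =>
    Sum.recOn q (definedAtLeft H) (definedAtRight H)
  let our_ideal : Order.Ideal (PIso e) := Order.idealOfCofinals seed to_cofinal
  have hseed : seed ∈ our_ideal := Order.mem_idealOfCofinals seed to_cofinal
  have Fex : ∀ a : X, ∃ b : X, ∃ f ∈ our_ideal, (a, b) ∈ f.1 := by
    intro a
    obtain ⟨f, ⟨b, hb⟩, hf⟩ := Order.cofinal_meets_idealOfCofinals seed to_cofinal (Sum.inl a)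
    exact ⟨b, f, hf, hb⟩
  have Gex : ∀ b : X, ∃ a : X, ∃ f ∈ our_ideal, (a, b) ∈ f.1 := by
    intro b
    obtain ⟨f, ⟨a, ha⟩, hf⟩ := Order.cofinal_meets_idealOfCofinals seed to_cofinal (Sum.inr b)
    exact ⟨a, f, hf, ha⟩
  choose F Ff FfI FfM using Fex
  choose G Gf GfI GfM using Gex
  have cmp_key : ∀ a b : X, cmp a (G b) = cmp (F a) b := by
    intro a b
    rcases our_ideal.directed _ (FfI a) _ (GfI b) with ⟨m, _, fm, gm⟩
    exact m.2.1 (a, F a) (fm (FfM a)) (G b, b) (gm (GfM b))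
  refine ⟨OrderIso.ofCmpEqCmp F G cmp_key, ?_, ?_⟩
  · show F p = p'
    rcases our_ideal.directed _ (FfI p) _ hseed with ⟨m, _, fm, sm⟩
    have h1 : (p, F p) ∈ m.1 := fm (FfM p)
    have h2 : (p, p') ∈ m.1 := sm (show (p, p') ∈ ({(p, p')} : Finset (X × X)) from Finset.mem_singleton_self _)
    have := m.2.1 (p, F p) h1 (p, p') h2
    rw [cmp_self_eq_eq] at this
    exact ((cmp_eq_eq_iff _ _).mp this.symm)
  · intro x
    show e (F x) = e x
    exact ((Ff x).2.2 (x, F x) (FfM x)).symm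

end ColoredBF

end ColoredBF

section Main

variable {C : Type} [Finite C]

/-- Step 1: there is an interval on which every occurring colour occurs densely. -/
lemma exists_good_interval (d : ℚ → C) :
    ∃ a b : ℚ, a < b ∧ ∀ q ∈ Set.Ioo a b, ∀ u v : ℚ, a ≤ u → u < v → v ≤ b →
      ∃ z : ℚ, u < z ∧ z < v ∧ d z = d q := by
  classical
  set S : Set ℕ := {n | ∃ u v : ℚ, u < v ∧ (d '' Set.Ioo u v).ncard = n} with hS
  have hSne : S.Nonempty := ⟨_, 0, 1, by norm_num, rfl⟩
  obtain ⟨a, b, hab, hcard⟩ : ∃ a b : ℚ, a < b ∧ (d '' Set.Ioo a b).ncard = sInf S :=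
    Nat.sInf_mem hSne
  refine ⟨a, b, hab, ?_⟩
  intro q hq u v hau huv hvb
  have hsub : Set.Ioo u v ⊆ Set.Ioo a b := Set.Ioo_subset_Ioo hau hvb
  have himg : d '' Set.Ioo u v ⊆ d '' Set.Ioo a b := Set.image_mono hsub
  have hmem : (d '' Set.Ioo u v).ncard ∈ S := ⟨u, v, huv, rfl⟩
  have hle : (d '' Set.Ioo a b).ncard ≤ (d '' Set.Ioo u v).ncard := by
    rw [hcard]; exact Nat.sInf_le hmem
  have heq : d '' Set.Ioo u v = d '' Set.Ioo a b :=
    Set.eq_of_subset_of_ncard_le himg hle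
  have : d q ∈ d '' Set.Ioo a b := ⟨q, hq, rfl⟩
  rw [← heq] at this
  obtain ⟨z, hz, hdz⟩ := this
  exact ⟨z, hz.1, hz.2, hdz⟩

/-- Step 2: every finite colouring of ℚ admits a nontrivial colour-preserving
order automorphism. -/
lemma exists_nontrivial_auto (d : ℚ → C) :
    ∃ f : ℚ ≃o ℚ, (∃ q : ℚ, f q ≠ q) ∧ ∀ q : ℚ, d (f q) = d q := by
  classical
  obtain ⟨a, b, hab, hdense⟩ := exists_good_interval d
  set X := ↥(Set.Ioo a b) with hX
  set e : X → C := fun x => d x.1 with he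
  -- the midpoint
  have hmid : (a + b) / 2 ∈ Set.Ioo a b := ⟨by linarith, by linarith⟩
  -- a second point of the same colour
  obtain ⟨z, hz1, hz2, hz3⟩ :=
    hdense _ hmid a ((a + b) / 2) le_rfl (by linarith) (by linarith)
  have hzI : z ∈ Set.Ioo a b := ⟨hz1, by linarith⟩
  set p : X := ⟨z, hzI⟩ with hp
  set p' : X := ⟨(a + b) / 2, hmid⟩ with hp'
  have hppne : p ≠ p' := by
    intro h
    apply absurd (congrArg Subtype.val h)
    simp only [hp, hp']
    intro h'
    linarith [hz2, h'.le]
  have hrich : ColoredBF.Rich e := by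
    intro w lo hi hlohi
    -- turn finsets into interval bounds
    by_cases nlo : lo.Nonempty
    · by_cases nhi : hi.Nonempty
      · set x := lo.max' nlo
        set y := hi.min' nhi
        have hxy : (x : ℚ) < (y : ℚ) := hlohi _ (lo.max'_mem nlo) _ (hi.min'_mem nhi)
        obtain ⟨m, hm1, hm2, hm3⟩ := hdense _ w.2 x y x.2.1.le hxy y.2.2.le
        have hmI : m ∈ Set.Ioo a b := ⟨lt_trans x.2.1 hm1, lt_trans hm2 y.2.2⟩
        refine ⟨⟨m, hmI⟩, ?_, ?_, hm3⟩
        · intro t ht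
          exact lt_of_le_of_lt (Subtype.coe_le_coe.mpr (lo.le_max' t ht)) hm1
        · intro t ht
          exact lt_of_lt_of_le hm2 (Subtype.coe_le_coe.mpr (hi.min'_le t ht))
      · set x := lo.max' nlo
        obtain ⟨m, hm1, hm2, hm3⟩ := hdense _ w.2 x b x.2.1.le x.2.2 le_rfl
        have hmI : m ∈ Set.Ioo a b := ⟨lt_trans x.2.1 hm1, hm2⟩
        refine ⟨⟨m, hmI⟩, ?_, ?_, hm3⟩
        · intro t ht
          exact lt_of_le_of_lt (Subtype.coe_le_coe.mpr (lo.le_max' t ht)) hm1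
        · intro t ht
          exact absurd (Finset.nonempty_of_ne_empty (Finset.ne_empty_of_mem ht)) nhi
    · by_cases nhi : hi.Nonempty
      · set y := hi.min' nhi
        obtain ⟨m, hm1, hm2, hm3⟩ := hdense _ w.2 a y le_rfl y.2.1 y.2.2.le
        have hmI : m ∈ Set.Ioo a b := ⟨hm1, lt_trans hm2 y.2.2⟩
        refine ⟨⟨m, hmI⟩, ?_, ?_, hm3⟩
        · intro t ht
          exact absurd (Finset.nonempty_of_ne_empty (Finset.ne_empty_of_mem ht)) nlo
        · intro t ht
          exact lt_of_lt_of_le hm2 (Subtype.coe_le_coe.mpr (hi.min'_le t ht))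
      · refine ⟨w, ?_, ?_, rfl⟩
        · intro t ht
          exact absurd (Finset.nonempty_of_ne_empty (Finset.ne_empty_of_mem ht)) nlo
        · intro t ht
          exact absurd (Finset.nonempty_of_ne_empty (Finset.ne_empty_of_mem ht)) nhi
  obtain ⟨g, hgp, hge⟩ := ColoredBF.exists_iso e hrich p p' (by simpa [he] using hz3)
  -- extend g to ℚ by the identity
  set f : ℚ → ℚ := fun q => if h : q ∈ Set.Ioo a b then (g ⟨q, h⟩).1 else q with hf
  set finv : ℚ → ℚ := fun q => if h : q ∈ Set.Ioo a b then (g.symm ⟨q, h⟩).1 else q with hfinv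
  have hfI : ∀ (q : ℚ) (h : q ∈ Set.Ioo a b), f q = (g ⟨q, h⟩).1 := by
    intro q h; simp only [hf]; exact dif_pos h
  have hfO : ∀ q : ℚ, q ∉ Set.Ioo a b → f q = q := by
    intro q h; simp only [hf]; exact dif_neg h
  have hmono : StrictMono f := by
    intro x y hxy
    by_cases hx : x ∈ Set.Ioo a b <;> by_cases hy : y ∈ Set.Ioo a b
    · rw [hfI x hx, hfI y hy]
      exact Subtype.coe_lt_coe.mpr (g.strictMono (Subtype.mk_lt_mk.mpr hxy))
    · -- y outside, y > x > a so y ≥ b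
      have hyb : b ≤ y := by
        by_contra hc
        exact hy ⟨lt_trans hx.1 hxy, lt_of_not_ge hc⟩
      rw [hfI x hx, hfO y hy]
      exact lt_of_lt_of_le (g ⟨x, hx⟩).2.2 hyb
    · have hxa : x ≤ a := by
        by_contra hc
        exact hx ⟨lt_of_not_ge hc, lt_trans hxy hy.2⟩
      rw [hfO x hx, hfI y hy]
      exact lt_of_le_of_lt hxa (g ⟨y, hy⟩).2.1
    · rw [hfO x hx, hfO y hy]; exact hxy
  have hsurj : Function.Surjective f := by
    intro q
    by_cases h : q ∈ Set.Ioo a b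
    · refine ⟨(g.symm ⟨q, h⟩).1, ?_⟩
      rw [hfI _ (g.symm ⟨q, h⟩).2]
      simp
    · exact ⟨q, hfO q h⟩
  refine ⟨StrictMono.orderIsoOfSurjective f hmono hsurj, ⟨z, ?_⟩, ?_⟩
  · show f z ≠ z
    rw [hfI z hzI]
    intro h
    have h2 : ((g ⟨z, hzI⟩ : X) : ℚ) = (a + b) / 2 := congrArg Subtype.val hgp
    rw [h] at h2
    linarith
  · intro q
    show d (f q) = d q
    by_cases h : q ∈ Set.Ioo a b
    · rw [hfI q h]
      exact hge ⟨q, h⟩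
    · rw [hfO q h]

end Main

theorem G_no_finite_distinguishing (C : Type) [Finite C] (c : ℚ ⊕ ℚ → C) :
    ∃ φ : G ≃g G, φ ≠ (SimpleGraph.Iso.refl : G ≃g G) ∧ ∀ v : ℚ ⊕ ℚ, c (φ v) = c v := by
  classical
  set d : ℚ → C × C := fun q => (c (inl q), c (inr q)) with hd
  obtain ⟨f, ⟨q0, hq0⟩, hfd⟩ := exists_nontrivial_auto d
  refine ⟨⟨Equiv.sumCongr f.toEquiv f.toEquiv, ?_⟩, ?_, ?_⟩
  · intro u v
    cases u <;> cases v <;> simp [G, f.lt_iff_lt]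
  · intro h
    have := DFunLike.congr_fun h (inl q0)
    simp at this
    exact hq0 this
  · intro v
    cases v with
    | inl q =>
      have := hfd q
      exact congrArg Prod.fst this
    | inr q =>
      have := hfd q
      exact congrArg Prod.snd this
end
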